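/- Let L be a finite geometric lattice of rank r equipped with the minimal labeling induced by any linear order on its atoms. Then every maximal chain of L is at distance at most binom(r,2) from the unique ascending chain of L in the facet-ridge incidence graph of the order complex of L. -/

import Mathlib

/-- A finite bounded lattice is *geometric* if it is atomistic (every element is a join
of atoms) and semimodular (whenever distinct `y`, `y'` both cover `x`, the join `y ⊔ y'`
covers both). -/
def IsGeometricLattice (L : Type*) [Lattice L] [BoundedOrder L] : Prop :=
  (∀ x : L, ∃ s : Finset L, (∀ a ∈ s, IsAtom a) ∧ s.sup id = x) ∧
  (∀ x y y' : L, y ≠ y' → x ⋖ y → x ⋖ y' → y ⋖ (y ⊔ y') ∧ y' ⋖ (y ⊔ y'))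

/-- `lab` is the minimal labeling induced by the linear order on the atoms of `L`
represented by the function `f` (injective on atoms): for every cover relation `u ⋖ v`,
`lab u v` is the atom `a ≤ v` with `a ≰ u` having the least value of `f`. -/
def IsMinimalLabeling {L : Type*} [Lattice L] [OrderBot L] (f : L → ℕ) (lab : L → L → L) : Prop :=
  ∀ u v : L, u ⋖ v →
    IsAtom (lab u v) ∧ lab u v ≤ v ∧ ¬ lab u v ≤ u ∧
    ∀ a : L, IsAtom a → a ≤ v → ¬ a ≤ u → f (lab u v) ≤ f a

/-- `g` is a maximal chain `⊥ = g 0 ⋖ g 1 ⋖ ⋯ ⋖ g r = ⊤`. -/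
def IsMaxChainFun {L : Type*} [PartialOrder L] [BoundedOrder L] (r : ℕ)
    (g : Fin (r+1) → L) : Prop :=
  g 0 = ⊥ ∧ g (Fin.last r) = ⊤ ∧ ∀ i : Fin r, g i.castSucc ⋖ g i.succ

/-- The label sequence of the maximal chain `g` with respect to the labeling `lab`. -/
def labelSeq {L : Type*} (lab : L → L → L) {r : ℕ} (g : Fin (r+1) → L) (i : Fin r) : L :=
  lab (g i.castSucc) (g i.succ)

/-- The facet-ridge incidence graph of the order complex of a graded bounded poset of rank
`r`: vertices are the maximal chains of `L`, two maximal chains being adjacent iff they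
differ in exactly one element. -/
def chainGraph (L : Type*) [PartialOrder L] [BoundedOrder L] (r : ℕ) :
    SimpleGraph {g : Fin (r+1) → L // IsMaxChainFun r g} where
  Adj M M' := ∃ i : Fin (r+1), M.1 i ≠ M'.1 i ∧ ∀ j : Fin (r+1), j ≠ i → M.1 j = M'.1 j
  symm := by
    constructor
    rintro M M' ⟨i, h1, h2⟩
    exact ⟨i, h1.symm, fun j hj => (h2 j hj).symm⟩
  loopless := by
    constructor
    rintro M ⟨i, h1, -⟩
    exact h1 rfl

section Aux

variable {L : Type*} [Lattice L] [Fintype L] [OrderBot L]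

/-- In a finite lattice, every non-bottom element covers something. -/
lemma aux_exists_covby {x : L} (hx : x ≠ ⊥) : ∃ u, u ⋖ x := by
  classical
  have hne : (Finset.univ.filter (· < x)).Nonempty :=
    ⟨⊥, by simp [bot_lt_iff_ne_bot.2 hx]⟩
  obtain ⟨u, hu, hmax⟩ := Finset.exists_maximal hne
  simp only [Finset.mem_filter, Finset.mem_univ, true_and] at hu
  refine ⟨u, hu, fun c huc hcx => lt_irrefl u (huc.trans_le (hmax ?_ huc.le))⟩
  simp [Finset.mem_filter, hcx]

/-- In a finite semimodular lattice, joining an atom not below `x` gives a cover of `x`. -/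
lemma aux_covby_sup_atom
    (hsm : ∀ x y y' : L, y ≠ y' → x ⋖ y → x ⋖ y' → y ⋖ (y ⊔ y') ∧ y' ⋖ (y ⊔ y'))
    (x : L) : ∀ a : L, IsAtom a → ¬ a ≤ x → x ⋖ x ⊔ a := by
  induction x using WellFoundedLT.induction with
  | _ x IH =>
    intro a ha hax
    by_cases hxb : x = ⊥
    · subst hxb; simpa using ha.bot_covBy
    obtain ⟨u, hu⟩ := aux_exists_covby hxb
    have hau : ¬ a ≤ u := fun h => hax (h.trans hu.le)
    have h1 : u ⋖ u ⊔ a := IH u hu.lt a ha hau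
    have hne : x ≠ u ⊔ a := by
      rintro rfl; exact hax le_sup_right
    have hres := hsm u x (u ⊔ a) hne hu h1
    have hx : x ⊔ (u ⊔ a) = x ⊔ a := by
      rw [← sup_assoc, sup_eq_left.2 hu.le]
    rw [hx] at hres
    exact hres.1

end Aux

/-- In a finite geometric lattice of rank `r` with the minimal labeling induced by a
linear order on its atoms, every maximal chain is at distance at most `r.choose 2` from
the unique ascending chain, in the facet-ridge incidence graph of the order complex. -/
theorem stmt1 (L : Type*) [Lattice L] [Fintype L] [BoundedOrder L] (r : ℕ)
    (hgeo : IsGeometricLattice L)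
    (hrank : ∀ c : Set L, IsMaxChain (· ≤ ·) c → c.ncard = r + 1)
    (f : L → ℕ) (hf : Set.InjOn f {a : L | IsAtom a})
    (lab : L → L → L) (hlab : IsMinimalLabeling f lab)
    (C : {g : Fin (r+1) → L // IsMaxChainFun r g})
    (hC : Monotone fun i => f (labelSeq lab C.1 i))
    (M : {g : Fin (r+1) → L // IsMaxChainFun r g}) :
    ∃ w : (chainGraph L r).Walk M C, w.length ≤ r.choose 2 := by
  classical
  set e : ℕ → Fin (r+1) := fun n => ⟨min n r, by omega⟩ with he_def
  have heval : ∀ n, (e n).val = min n r := fun n => rfl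
  have he0 : e 0 = 0 := by
    apply Fin.ext; simp [heval]
  have her : e r = Fin.last r := by
    apply Fin.ext; simp [heval, Fin.val_last]
  have heinj : ∀ m n : ℕ, m ≤ r → n ≤ r → e m = e n → m = n := by
    intro m n hm hn h
    have := congrArg Fin.val h
    simp only [heval] at this
    omega
  have hecast : ∀ (n : ℕ) (hn : n < r), e n = (⟨n, hn⟩ : Fin r).castSucc := by
    intro n hn; apply Fin.ext; simp [heval, Fin.castSucc]; omega
  have hesucc : ∀ (n : ℕ) (hn : n < r), e (n+1) = (⟨n, hn⟩ : Fin r).succ := by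
    intro n hn; apply Fin.ext; simp [heval, Fin.succ]; omega
  have hcov : ∀ (N : {g : Fin (r+1) → L // IsMaxChainFun r g}) (n : ℕ), n < r →
      N.1 (e n) ⋖ N.1 (e (n+1)) := by
    intro N n hn
    have := N.2.2.2 ⟨n, hn⟩
    rwa [← hecast n hn, ← hesucc n hn] at this
  have hstep : ∀ (N : {g : Fin (r+1) → L // IsMaxChainFun r g}) (n : ℕ),
      N.1 (e n) ≤ N.1 (e (n+1)) := by
    intro N n
    by_cases hn : n < r
    · exact (hcov N n hn).le
    · have : e n = e (n+1) := by apply Fin.ext; simp [heval]; omega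
      rw [this]
  have hmono : ∀ (N : {g : Fin (r+1) → L // IsMaxChainFun r g}) (m n : ℕ), m ≤ n →
      N.1 (e m) ≤ N.1 (e n) := by
    intro N m n h
    induction h with
    | refl => exact le_rfl
    | step h ih => exact ih.trans (hstep N _)
  -- squeeze lemma
  have hsq : ∀ x y z : L, x ⋖ y → y ≤ z → x ⋖ z → y = z := by
    intro x y z hxy hyz hxz
    rcases lt_or_eq_of_le hyz with hlt | heq
    · exact absurd hlt (hxz.2 hxy.lt)
    · exact heq
  -- characterization of max chains via e
  have hchain_e : ∀ g : Fin (r+1) → L, g (e 0) = ⊥ → g (e r) = ⊤ →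
      (∀ n, n < r → g (e n) ⋖ g (e (n+1))) → IsMaxChainFun r g := by
    intro g h0 hr' hc
    refine ⟨by rwa [he0] at h0, by rwa [her] at hr', ?_⟩
    intro i
    have := hc i.val i.isLt
    rwa [hecast i.val i.isLt, hesucc i.val i.isLt] at this
  -- key fact about C: each step of C is obtained by joining an atom
  have hB : ∀ (n : ℕ) (hn : n < r),
      IsAtom (labelSeq lab C.1 ⟨n, hn⟩) ∧ ¬ labelSeq lab C.1 ⟨n, hn⟩ ≤ C.1 (e n) ∧
      C.1 (e (n+1)) = C.1 (e n) ⊔ labelSeq lab C.1 ⟨n, hn⟩ := by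
    intro n hn
    have hlabel : labelSeq lab C.1 ⟨n, hn⟩ = lab (C.1 (e n)) (C.1 (e (n+1))) := by
      rw [labelSeq, ← hecast n hn, ← hesucc n hn]
    obtain ⟨ha, hle, hnle, -⟩ := hlab (C.1 (e n)) (C.1 (e (n+1))) (hcov C n hn)
    rw [← hlabel] at ha hle hnle
    refine ⟨ha, hnle, ?_⟩
    have hcb : C.1 (e n) ⋖ C.1 (e n) ⊔ labelSeq lab C.1 ⟨n, hn⟩ :=
      aux_covby_sup_atom hgeo.2 _ _ ha hnle
    exact (hsq _ _ _ hcb (sup_le (hcov C n hn).le hle) (hcov C n hn)).symm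
  -- main induction : if M agrees with C up to level r - t, then M is within
  -- t.choose 2 of C.
  have main : ∀ t : ℕ, ∀ M : {g : Fin (r+1) → L // IsMaxChainFun r g},
      (∀ j, j ≤ r - t → M.1 (e j) = C.1 (e j)) →
      ∃ w : (chainGraph L r).Walk M C, w.length ≤ t.choose 2 := by
    intro t
    induction t with
    | zero =>
      intro M hM
      have hMC : M = C := by
        apply Subtype.ext; funext j
        have hj : j = e j.val := by apply Fin.ext; simp [heval]; omega
        rw [hj]; exact hM j.val (by omega)
      subst hMC
      exact ⟨SimpleGraph.Walk.nil, by simp⟩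
    | succ t IH =>
      intro M hM
      by_cases hrt : r ≤ t
      · obtain ⟨w, hw⟩ := IH M (fun j hj => hM j (by omega))
        exact ⟨w, hw.trans (Nat.choose_le_choose 2 (Nat.le_succ t))⟩
      -- now t < r
      set k := r - (t+1) with hk_def
      have hk : k < r := by omega
      set a := labelSeq lab C.1 ⟨k, hk⟩ with ha_def
      obtain ⟨ha_atom, ha_nle, ha_eq⟩ := hB k hk
      have inner : ∀ d : ℕ, ∀ M : {g : Fin (r+1) → L // IsMaxChainFun r g},
          (∀ j, j ≤ k → M.1 (e j) = C.1 (e j)) →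
          a ≤ M.1 (e (k+1+d)) →
          ∃ w : (chainGraph L r).Walk M C, w.length ≤ d + t.choose 2 := by
        intro d
        induction d with
        | zero =>
          intro M hMa had
          have hMk : M.1 (e k) = C.1 (e k) := hMa k le_rfl
          have hcb : C.1 (e k) ⋖ C.1 (e k) ⊔ a :=
            aux_covby_sup_atom hgeo.2 _ _ ha_atom ha_nle
          have hle : C.1 (e k) ⊔ a ≤ M.1 (e (k+1)) := by
            refine sup_le ?_ (by simpa using had)
            rw [← hMk]; exact (hcov M k hk).le
          have hMcov : C.1 (e k) ⋖ M.1 (e (k+1)) := by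
            rw [← hMk]; exact hcov M k hk
          have hMk1 : M.1 (e (k+1)) = C.1 (e (k+1)) := by
            rw [ha_eq]; exact (hsq _ _ _ hcb hle hMcov).symm
          refine (IH M ?_).imp (fun w hw => by omega)
          intro j hj
          rcases Nat.lt_or_ge j (k+1) with hj' | hj'
          · exact hMa j (by omega)
          · have hjk : j = k+1 := by omega
            rw [hjk]; exact hMk1
        | succ d IHd =>
          intro M hMa had
          by_cases hprev : a ≤ M.1 (e (k+1+d))
          · obtain ⟨w, hw⟩ := IHd M hMa hprev
            exact ⟨w, by omega⟩
          have hlt : k+1+d < r := by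
            by_contra hge
            apply hprev
            have : e (k+1+d) = e r := by apply Fin.ext; simp [heval]; omega
            rw [this, her, M.2.2.1]
            exact le_top
          have hpd : k+d < r := by omega
          have hnot2 : ¬ a ≤ M.1 (e (k+d)) :=
            fun hh => hprev (hh.trans (hmono M (k+d) (k+1+d) (by omega)))
          set y' := M.1 (e (k+d)) ⊔ a with hy'_def
          have hy'cov : M.1 (e (k+d)) ⋖ y' := aux_covby_sup_atom hgeo.2 _ _ ha_atom hnot2
          have hMcov1 : M.1 (e (k+d)) ⋖ M.1 (e (k+1+d)) := by
            have h' := hcov M (k+d) hpd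
            rwa [show k+d+1 = k+1+d by omega] at h'
          have hne : M.1 (e (k+1+d)) ≠ y' := fun h => hprev (h ▸ le_sup_right)
          obtain ⟨hcov1, hcov2⟩ := hgeo.2 (M.1 (e (k+d))) (M.1 (e (k+1+d))) y' hne hMcov1 hy'cov
          have hsup_le : M.1 (e (k+1+d)) ⊔ y' ≤ M.1 (e (k+1+d+1)) := by
            refine sup_le (hstep M _) (sup_le ?_ had)
            exact hmono M (k+d) (k+1+d+1) (by omega)
          have hsupeq : M.1 (e (k+1+d)) ⊔ y' = M.1 (e (k+1+d+1)) :=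
            hsq _ _ _ hcov1 hsup_le (hcov M (k+1+d) hlt)
          have hy'cov2 : y' ⋖ M.1 (e (k+1+d+1)) := hsupeq ▸ hcov2
          -- the new chain obtained by the elementary move
          set g' : Fin (r+1) → L := fun j => if j = e (k+1+d) then y' else M.1 j with hg'_def
          have hg'e : ∀ n, n ≤ r → n ≠ k+1+d → g' (e n) = M.1 (e n) := by
            intro n hn hne'
            simp only [hg'_def]
            rw [if_neg (fun h => hne' (heinj n (k+1+d) hn (by omega) h))]
          have hg'p : g' (e (k+1+d)) = y' := by simp [hg'_def]
          have hg'chain : IsMaxChainFun r g' := by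
            apply hchain_e
            · rw [hg'e 0 (by omega) (by omega), he0, M.2.1]
            · rw [hg'e r le_rfl (by omega), her, M.2.2.1]
            · intro n hn
              rcases eq_or_ne n (k+d) with rfl | h1
              · rw [hg'e (k+d) (by omega) (by omega), show k+d+1 = k+1+d by omega, hg'p]
                exact hy'cov
              rcases eq_or_ne n (k+1+d) with rfl | h2
              · rw [hg'p, hg'e (k+1+d+1) (by omega) (by omega)]
                exact hy'cov2
              · rw [hg'e n (by omega) h2, hg'e (n+1) (by omega) (by omega)]
                exact hcov M n hn
          set M' : {g : Fin (r+1) → L // IsMaxChainFun r g} := ⟨g', hg'chain⟩ with hM'_def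
          have hadj : (chainGraph L r).Adj M M' := by
            refine ⟨e (k+1+d), ?_, ?_⟩
            · show M.1 (e (k+1+d)) ≠ g' (e (k+1+d))
              rw [hg'p]; exact hne
            · intro j hj
              show M.1 j = g' j
              simp only [hg'_def]
              rw [if_neg hj]
          have hagree' : ∀ j, j ≤ k → M'.1 (e j) = C.1 (e j) := by
            intro j hj
            show g' (e j) = C.1 (e j)
            rw [hg'e j (by omega) (by omega)]
            exact hMa j hj
          have ha' : a ≤ M'.1 (e (k+1+d)) := by
            show a ≤ g' (e (k+1+d))
            rw [hg'p]
            exact le_sup_right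
          obtain ⟨w, hw⟩ := IHd M' hagree' ha'
          exact ⟨SimpleGraph.Walk.cons hadj w, by rw [SimpleGraph.Walk.length_cons]; omega⟩
      have hkr : k + 1 + t = r := by omega
      obtain ⟨w, hw⟩ := inner t M (fun j hj => hM j hj)
        (by rw [hkr, her, M.2.2.1]; exact le_top)
      refine ⟨w, hw.trans ?_⟩
      have hch : (t+1).choose 2 = t + t.choose 2 := by
        rw [Nat.choose_succ_succ t 1, Nat.choose_one_right]
      omega
  have hstart : ∀ j, j ≤ r - r → M.1 (e j) = C.1 (e j) := by
    intro j hj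
    have hj0 : j = 0 := by omega
    subst hj0
    rw [he0, M.2.1, C.2.1]
  obtain ⟨w, hw⟩ := main r M hstart
  exact ⟨w, hw⟩
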